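/- Let m ≥ 1 and let R : ℝ → (Fin m → ℝ) be a differentiable solution of the radial Willmore system dR_i/dτ = (d-1)M₁/(2M₂) · R_i⁻¹·([(3-d)R_i⁻¹ + a₀][(d-1)R_i⁻¹ - a₀] - R_c⁻²), where R_c⁻² = (Σ_j [(3-d)R_j⁻¹ + a₀][(d-1)R_j⁻¹ - a₀] R_j^{d-3}) / (Σ_j R_j^{d-3}), with all R_i(τ) > 0. Then the total interfacial area Σ_{j=1}^m R_j(τ)^{d-1} is constant in τ. -/

import Mathlib

open Real Finset

/-- The radial Willmore system conserves total interfacial area `∑ j, R j ^ (d-1)`. -/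
theorem stmt_0 (m d : ℕ) (hm : 1 ≤ m) (hd : 2 ≤ d)
    (M₁ M₂ a₀ : ℝ) (hM₁ : 0 < M₁) (hM₂ : 0 < M₂)
    (R : ℝ → Fin m → ℝ)
    (hpos : ∀ τ i, 0 < R τ i)
    (hdiff : ∀ i : Fin m, Differentiable ℝ (fun t => R t i))
    (hODE : ∀ τ (i : Fin m),
      HasDerivAt (fun t => R t i)
        (((d : ℝ) - 1) * M₁ / (2 * M₂) * (R τ i)⁻¹ *
          ((((3 : ℝ) - d) * (R τ i)⁻¹ + a₀) * (((d : ℝ) - 1) * (R τ i)⁻¹ - a₀)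
            - (∑ j, (((3 : ℝ) - d) * (R τ j)⁻¹ + a₀) * (((d : ℝ) - 1) * (R τ j)⁻¹ - a₀)
                * (R τ j) ^ ((d : ℝ) - 3))
              / (∑ j, (R τ j) ^ ((d : ℝ) - 3)))) τ) :
    ∀ τ₁ τ₂ : ℝ, ∑ j, (R τ₁ j) ^ ((d : ℝ) - 1) = ∑ j, (R τ₂ j) ^ ((d : ℝ) - 1) := by
  have hnem : Nonempty (Fin m) := ⟨⟨0, hm⟩⟩
  have key : ∀ τ, HasDerivAt (fun t => ∑ j, (R t j) ^ ((d : ℝ) - 1)) 0 τ := by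
    intro τ
    have hT : 0 < ∑ j, (R τ j) ^ ((d : ℝ) - 3) :=
      Finset.sum_pos (fun j _ => Real.rpow_pos_of_pos (hpos τ j) _) Finset.univ_nonempty
    set F : Fin m → ℝ := fun j =>
      (((3 : ℝ) - d) * (R τ j)⁻¹ + a₀) * (((d : ℝ) - 1) * (R τ j)⁻¹ - a₀) with hF
    set S := ∑ j, F j * (R τ j) ^ ((d : ℝ) - 3) with hS
    set T := ∑ j, (R τ j) ^ ((d : ℝ) - 3) with hTdef
    have sum_deriv :
        HasDerivAt (fun t => ∑ j, (R t j) ^ ((d : ℝ) - 1))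
          (∑ i, ((((d : ℝ) - 1) * M₁ / (2 * M₂) * (R τ i)⁻¹ * (F i - S / T))
            * ((d : ℝ) - 1) * (R τ i) ^ ((d : ℝ) - 1 - 1))) τ :=
      HasDerivAt.fun_sum (fun i _ => (hODE τ i).rpow_const (Or.inl (hpos τ i).ne'))
    have hpow : ∀ i : Fin m,
        (R τ i)⁻¹ * (R τ i) ^ ((d : ℝ) - 1 - 1) = (R τ i) ^ ((d : ℝ) - 3) := by
      intro i
      rw [← Real.rpow_neg_one (R τ i), ← Real.rpow_add (hpos τ i)]
      congr 1
      ring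
    have h0 : (∑ i, ((((d : ℝ) - 1) * M₁ / (2 * M₂) * (R τ i)⁻¹ * (F i - S / T))
        * ((d : ℝ) - 1) * (R τ i) ^ ((d : ℝ) - 1 - 1))) = 0 := by
      have step : ∀ i ∈ Finset.univ,
          ((((d : ℝ) - 1) * M₁ / (2 * M₂) * (R τ i)⁻¹ * (F i - S / T))
            * ((d : ℝ) - 1) * (R τ i) ^ ((d : ℝ) - 1 - 1))
          = (((d : ℝ) - 1) * M₁ / (2 * M₂) * ((d : ℝ) - 1)) *
              (F i * (R τ i) ^ ((d : ℝ) - 3) - (S / T) * (R τ i) ^ ((d : ℝ) - 3)) := by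
        intro i _
        rw [← hpow i]; ring
      rw [Finset.sum_congr rfl step, ← Finset.mul_sum, Finset.sum_sub_distrib,
        ← Finset.mul_sum, ← hS, ← hTdef, div_mul_cancel₀ _ hT.ne', sub_self, mul_zero]
    exact h0 ▸ sum_deriv
  intro τ₁ τ₂
  exact is_const_of_deriv_eq_zero (fun x => (key x).differentiableAt)
    (fun x => (key x).deriv) τ₁ τ₂
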